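/- Let X be a finite type, e : X → ℝ^T, p a pmf on X, q(x) pmf's on X, β ∈ (0,1). The minimal expected squared error min_f L(f) (with L as in the finite-type optimal denoising theorem) equals ∑_{x̃: D(x̃)>0} [ β·p(x̃)·(1−ω(x̃))²·‖e(x̃)−g⋆(x̃)‖² + (1−β)·( ∑_x p(x)·q(x)(x̃)·‖g⋆(x̃)−e(x)‖² + q̃(x̃)·ω(x̃)²·‖e(x̃)−g⋆(x̃)‖² ) ], where D(x̃) = p(x̃) + γ·q̃(x̃), γ = (1−β)/β, q̃(x̃) = ∑_x p(x)·q(x)(x̃), g⋆ the conditional mean and ω(x̃) = p(x̃)/D(x̃). -/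

import Mathlib

lemma wls_identity {E : Type*} [NormedAddCommGroup E] [InnerProductSpace ℝ E]
    {ι : Type*} (s : Finset ι) (w : ι → ℝ) (a : ι → E) (v vs : E)
    (h : (∑ i ∈ s, w i) • vs = ∑ i ∈ s, w i • a i) :
    ∑ i ∈ s, w i * ‖v - a i‖ ^ 2 =
      (∑ i ∈ s, w i * ‖vs - a i‖ ^ 2) + (∑ i ∈ s, w i) * ‖v - vs‖ ^ 2 := by
  have hz : ∑ i ∈ s, w i • (vs - a i) = (0 : E) := by
    simp only [smul_sub]
    rw [Finset.sum_sub_distrib, ← Finset.sum_smul, h, sub_self]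
  have expand : ∀ i ∈ s, w i * ‖v - a i‖ ^ 2 =
      w i * ‖vs - a i‖ ^ 2 + 2 * (inner ℝ (v - vs) (w i • (vs - a i)) : ℝ)
        + w i * ‖v - vs‖ ^ 2 := by
    intro i _
    have hsplit : v - a i = (v - vs) + (vs - a i) := by abel
    rw [hsplit, norm_add_sq_real, real_inner_smul_right]
    ring
  rw [Finset.sum_congr rfl expand, Finset.sum_add_distrib, Finset.sum_add_distrib]
  have h2 : ∑ i ∈ s, 2 * (inner ℝ (v - vs) (w i • (vs - a i)) : ℝ) = 0 := by
    rw [← Finset.mul_sum, ← inner_sum, hz, inner_zero_right, mul_zero]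
  rw [h2, ← Finset.sum_mul]
  ring

lemma wls_two {E : Type*} [NormedAddCommGroup E] [InnerProductSpace ℝ E]
    (w1 w2 : ℝ) (a1 a2 v vs : E)
    (h : (w1 + w2) • vs = w1 • a1 + w2 • a2) :
    w1 * ‖v - a1‖ ^ 2 + w2 * ‖v - a2‖ ^ 2 =
      w1 * ‖vs - a1‖ ^ 2 + w2 * ‖vs - a2‖ ^ 2 + (w1 + w2) * ‖v - vs‖ ^ 2 := by
  have hz : w1 • (vs - a1) + w2 • (vs - a2) = (0 : E) := by
    rw [smul_sub, smul_sub]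
    rw [add_smul] at h
    rw [show w1 • vs - w1 • a1 + (w2 • vs - w2 • a2)
        = (w1 • vs + w2 • vs) - (w1 • a1 + w2 • a2) by abel, ← h, sub_self]
  have hiz : (inner ℝ (v - vs) (w1 • (vs - a1) + w2 • (vs - a2)) : ℝ) = 0 := by
    rw [hz, inner_zero_right]
  rw [inner_add_right, real_inner_smul_right, real_inner_smul_right] at hiz
  have h1 : v - a1 = (v - vs) + (vs - a1) := by abel
  have h2 : v - a2 = (v - vs) + (vs - a2) := by abel
  rw [h1, h2, norm_add_sq_real, norm_add_sq_real]
  linear_combination 2 * hiz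

/-- Closed form of the minimal expected squared error of the optimal denoiser:
the minimum of `L` is attained by `f⋆(y) = ω(y) • e(y) + (1-ω(y)) • g⋆(y)` and
equals the stated sum over the noisy points `y` with `D(y) = p(y) + γ·qt(y) > 0`. -/
theorem optimal_denoiser_value
    {X : Type*} [Fintype X] [DecidableEq X] {T : ℕ} (e : X → EuclideanSpace ℝ (Fin T))
    (β : ℝ) (hβ : β ∈ Set.Ioo (0 : ℝ) 1)
    (p : X → ℝ) (hp : ∀ x, 0 ≤ p x) (hp1 : ∑ x, p x = 1)
    (q : X → X → ℝ) (hq : ∀ x y, 0 ≤ q x y) (hq1 : ∀ x, ∑ y, q x y = 1)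
    (γ : ℝ) (hγ : γ = (1 - β) / β)
    (qt : X → ℝ) (hqt : ∀ y, qt y = ∑ x, p x * q x y)
    (g : X → EuclideanSpace ℝ (Fin T))
    (hg : ∀ y, 0 < qt y → g y = (qt y)⁻¹ • ∑ x, (p x * q x y) • e x)
    (ω : X → ℝ) (hω : ∀ y, ω y = p y / (p y + γ * qt y))
    (fstar : X → EuclideanSpace ℝ (Fin T))
    (hfstar : ∀ y, 0 < p y + γ * qt y →
        fstar y = ω y • e y + (1 - ω y) • g y) :
    (∀ f : X → EuclideanSpace ℝ (Fin T),
      (∑ x, ∑ y, p x * (β * (if y = x then (1 : ℝ) else 0) + (1 - β) * q x y) *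
          ‖fstar y - e x‖ ^ 2) ≤
      (∑ x, ∑ y, p x * (β * (if y = x then (1 : ℝ) else 0) + (1 - β) * q x y) *
          ‖f y - e x‖ ^ 2)) ∧
    (∑ x, ∑ y, p x * (β * (if y = x then (1 : ℝ) else 0) + (1 - β) * q x y) *
        ‖fstar y - e x‖ ^ 2) =
      ∑ y ∈ Finset.univ.filter (fun y => 0 < p y + γ * qt y),
        (β * p y * (1 - ω y) ^ 2 * ‖e y - g y‖ ^ 2 +
          (1 - β) * ((∑ x, p x * q x y * ‖g y - e x‖ ^ 2) +
            qt y * (ω y) ^ 2 * ‖e y - g y‖ ^ 2)) := by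
  obtain ⟨hβ0, hβ1⟩ := hβ
  have hγpos : 0 < γ := by rw [hγ]; exact div_pos (by linarith) hβ0
  have hβγ : β * γ = 1 - β := by rw [hγ]; field_simp
  have hqtnn : ∀ y, 0 ≤ qt y := fun y => by
    rw [hqt]; exact Finset.sum_nonneg fun x _ => mul_nonneg (hp x) (hq x y)
  -- the weighted barycenter identity for g
  have hgkey : ∀ y, qt y • g y = ∑ x, (p x * q x y) • e x := by
    intro y
    rcases (hqtnn y).lt_or_eq with h | h
    · rw [hg y h, smul_smul, mul_inv_cancel₀ h.ne', one_smul]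
    · have hs : ∑ x, p x * q x y = 0 := by rw [← hqt y, ← h]
      have hzero := (Finset.sum_eq_zero_iff_of_nonneg
        (fun x _ => mul_nonneg (hp x) (hq x y))).mp hs
      rw [← h, zero_smul]
      exact (Finset.sum_eq_zero fun x hx => by rw [hzero x hx, zero_smul]).symm
  -- pointwise decomposition of the inner (clean-data) sum
  have hinner : ∀ (y : X) (v : EuclideanSpace ℝ (Fin T)),
      ∑ x, p x * q x y * ‖v - e x‖ ^ 2 =
        (∑ x, p x * q x y * ‖g y - e x‖ ^ 2) + qt y * ‖v - g y‖ ^ 2 := by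
    intro y v
    have h := wls_identity Finset.univ (fun x => p x * q x y) e v (g y)
      (by rw [← hqt y]; exact hgkey y)
    rw [← hqt y] at h
    exact h
  -- rewrite L as a sum over noisy points
  have hL : ∀ f : X → EuclideanSpace ℝ (Fin T),
      (∑ x, ∑ y, p x * (β * (if y = x then (1 : ℝ) else 0) + (1 - β) * q x y) *
          ‖f y - e x‖ ^ 2) =
      ∑ y, (β * p y * ‖f y - e y‖ ^ 2 +
        (1 - β) * ∑ x, p x * q x y * ‖f y - e x‖ ^ 2) := by
    intro f
    have hterm : ∀ x y, p x * (β * (if y = x then (1 : ℝ) else 0) + (1 - β) * q x y) *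
        ‖f y - e x‖ ^ 2 =
        (if y = x then β * p x * ‖f x - e x‖ ^ 2 else 0) +
          (1 - β) * (p x * q x y * ‖f y - e x‖ ^ 2) := by
      intro x y
      by_cases h : y = x
      · subst h; simp; ring
      · simp [h]; ring
    simp_rw [hterm, Finset.sum_add_distrib, Finset.sum_ite_eq' Finset.univ,
      Finset.mem_univ, if_true, ← Finset.mul_sum]
    rw [Finset.sum_comm]
  -- the per-y objective at fstar / minimality, for D y > 0
  have hDnn : ∀ y, 0 ≤ p y + γ * qt y := fun y =>
    add_nonneg (hp y) (mul_nonneg hγpos.le (hqtnn y))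
  have houter : ∀ y, 0 < p y + γ * qt y →
      ∀ v : EuclideanSpace ℝ (Fin T),
      β * p y * ‖v - e y‖ ^ 2 + (1 - β) * qt y * ‖v - g y‖ ^ 2 =
        (β * p y * ‖fstar y - e y‖ ^ 2 + (1 - β) * qt y * ‖fstar y - g y‖ ^ 2) +
          (β * (p y + γ * qt y)) * ‖v - fstar y‖ ^ 2 := by
    intro y hD v
    have hDne : p y + γ * qt y ≠ 0 := hD.ne'
    have hvs : (β * p y + (1 - β) * qt y) • fstar y =
        (β * p y) • e y + ((1 - β) * qt y) • g y := by
      rw [hfstar y hD, smul_add, smul_smul, smul_smul]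
      congr 2
      · rw [hω y, ← hβγ]; field_simp
      · rw [hω y, ← hβγ]; field_simp; ring
    have h := wls_two (β * p y) ((1 - β) * qt y) (e y) (g y) v (fstar y) hvs
    have hWsum : β * p y + (1 - β) * qt y = β * (p y + γ * qt y) := by
      rw [← hβγ]; ring
    rw [hWsum] at h
    linarith [h]
  -- norms at fstar, for D y > 0
  have hfe : ∀ y, 0 < p y + γ * qt y →
      ‖fstar y - e y‖ ^ 2 = (1 - ω y) ^ 2 * ‖e y - g y‖ ^ 2 := by
    intro y hD
    have : fstar y - e y = (1 - ω y) • (g y - e y) := by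
      rw [hfstar y hD]; module
    rw [this, norm_smul, mul_pow, Real.norm_eq_abs, sq_abs, norm_sub_rev]
  have hfg : ∀ y, 0 < p y + γ * qt y →
      ‖fstar y - g y‖ ^ 2 = (ω y) ^ 2 * ‖e y - g y‖ ^ 2 := by
    intro y hD
    have : fstar y - g y = ω y • (e y - g y) := by
      rw [hfstar y hD]; module
    rw [this, norm_smul, mul_pow, Real.norm_eq_abs, sq_abs]
  -- degenerate case D y = 0
  have hD0 : ∀ y, ¬ 0 < p y + γ * qt y → p y = 0 ∧ ∀ x, p x * q x y = 0 := by
    intro y h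
    have hD : p y + γ * qt y = 0 := le_antisymm (not_lt.mp h) (hDnn y)
    have hpy : p y = 0 := by nlinarith [hqtnn y, hp y]
    have hqty : qt y = 0 := by nlinarith [hqtnn y]
    have hs : ∑ x, p x * q x y = 0 := by rw [← hqt y]; exact hqty
    exact ⟨hpy, fun x => (Finset.sum_eq_zero_iff_of_nonneg
      (fun x _ => mul_nonneg (hp x) (hq x y))).mp hs x (Finset.mem_univ x)⟩
  -- per-y value at fstar
  have hval : ∀ y, 0 < p y + γ * qt y →
      β * p y * ‖fstar y - e y‖ ^ 2 +
        (1 - β) * ∑ x, p x * q x y * ‖fstar y - e x‖ ^ 2 =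
      β * p y * (1 - ω y) ^ 2 * ‖e y - g y‖ ^ 2 +
        (1 - β) * ((∑ x, p x * q x y * ‖g y - e x‖ ^ 2) +
          qt y * (ω y) ^ 2 * ‖e y - g y‖ ^ 2) := by
    intro y hD
    rw [hinner y (fstar y), hfe y hD, hfg y hD]
    ring
  -- per-y minimality
  have hmin : ∀ (f : X → EuclideanSpace ℝ (Fin T)) (y : X),
      β * p y * ‖fstar y - e y‖ ^ 2 +
        (1 - β) * ∑ x, p x * q x y * ‖fstar y - e x‖ ^ 2 ≤
      β * p y * ‖f y - e y‖ ^ 2 +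
        (1 - β) * ∑ x, p x * q x y * ‖f y - e x‖ ^ 2 := by
    intro f y
    by_cases hD : 0 < p y + γ * qt y
    · have h1 := houter y hD (f y)
      have h2 := houter y hD (fstar y)
      rw [hinner y (fstar y), hinner y (f y)]
      have hnn : 0 ≤ (β * (p y + γ * qt y)) * ‖f y - fstar y‖ ^ 2 :=
        mul_nonneg (mul_nonneg hβ0.le (hDnn y)) (sq_nonneg _)
      nlinarith [h1, h2]
    · obtain ⟨hpy, hpq⟩ := hD0 y hD
      have hz : ∀ v : EuclideanSpace ℝ (Fin T),
          β * p y * ‖v - e y‖ ^ 2 + (1 - β) * ∑ x, p x * q x y * ‖v - e x‖ ^ 2 = 0 := by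
        intro v
        rw [hpy, Finset.sum_eq_zero fun x _ => by rw [hpq x, zero_mul]]
        ring
      rw [hz (fstar y), hz (f y)]
  constructor
  · intro f
    rw [hL fstar, hL f]
    exact Finset.sum_le_sum fun y _ => hmin f y
  · rw [hL fstar, Finset.sum_filter]
    refine Finset.sum_congr rfl fun y _ => ?_
    by_cases hD : 0 < p y + γ * qt y
    · rw [if_pos hD]; exact hval y hD
    · rw [if_neg hD]
      obtain ⟨hpy, hpq⟩ := hD0 y hD
      rw [hpy, Finset.sum_eq_zero fun x _ => by rw [hpq x, zero_mul]]
      ring
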